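/- Let k ∈ ℝ and let f : ℝⁿ → ℝ be C³ on ℝⁿ \ {0} and positively homogeneous of degree k. Let v ≠ 0 with k · f(v) ≠ 0. Then for every X ∈ ℝⁿ, writing X₀ = X − (Df(v)(X)/(k · f(v))) · v, one has D³f(v)(X, X, X) = D³f(v)(X₀, X₀, X₀) + (3(k − 2)/(k · f(v))) · D²f(v)(X₀, X₀) · Df(v)(X) + ((k − 1)(k − 2)/(k · f(v))²) · (Df(v)(X))³. -/

import Mathlib

open ContinuousLinearMap Filter

section
variable {E : Type*} [NormedAddCommGroup E] [NormedSpace ℝ E]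

/-- Euler-type identity along the ray. -/
lemma euler_aux {h : E → ℝ} {v : E} {m : ℝ} (hd : DifferentiableAt ℝ h v)
    (hh : ∀ t : ℝ, 0 < t → h (t • v) = t ^ m * h v) :
    fderiv ℝ h v v = m * h v := by
  have hc : HasDerivAt (fun t : ℝ => t • v) ((1 : ℝ) • v) 1 :=
    (hasDerivAt_id (1 : ℝ)).smul_const v
  have h1 : HasDerivAt (fun t : ℝ => h (t • v)) (fderiv ℝ h v v) 1 := by
    have hd' : HasFDerivAt h (fderiv ℝ h v) ((1:ℝ) • v) := by
      simpa using hd.hasFDerivAt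
    have := hd'.comp_hasDerivAt (x := (1:ℝ)) hc
    simp only [one_smul] at this
    exact this
  have h2 : HasDerivAt (fun t : ℝ => t ^ m * h v) (m * h v) 1 := by
    have := (Real.hasDerivAt_rpow_const (x := (1:ℝ)) (p := m) (Or.inl one_ne_zero)).mul_const (h v)
    simpa using this
  have h3 : (fun t : ℝ => t ^ m * h v) =ᶠ[nhds 1] fun t : ℝ => h (t • v) := by
    filter_upwards [isOpen_Ioi.mem_nhds (Set.mem_Ioi.2 zero_lt_one)] with t ht
    exact (hh t ht).symm
  exact h1.unique (h2.congr_of_eventuallyEq h3.symm)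

set_option maxHeartbeats 1000000 in
lemma main_aux (k : ℝ) (f : E → ℝ)
    (hf : ContDiffOn ℝ 3 f {x | x ≠ 0})
    (hhom : ∀ t : ℝ, 0 < t → ∀ x : E, x ≠ 0 → f (t • x) = t ^ k * f x)
    (v : E) (hv : v ≠ 0) (hkf : k * f v ≠ 0) (X : E) :
    fderiv ℝ (fderiv ℝ (fderiv ℝ f)) v X X X =
      fderiv ℝ (fderiv ℝ (fderiv ℝ f)) v (X - (fderiv ℝ f v X / (k * f v)) • v)
        (X - (fderiv ℝ f v X / (k * f v)) • v) (X - (fderiv ℝ f v X / (k * f v)) • v) +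
      (3 * (k - 2) / (k * f v)) *
        fderiv ℝ (fderiv ℝ f) v (X - (fderiv ℝ f v X / (k * f v)) • v)
          (X - (fderiv ℝ f v X / (k * f v)) • v) *
        fderiv ℝ f v X +
      ((k - 1) * (k - 2) / (k * f v) ^ 2) * (fderiv ℝ f v X) ^ 3 := by
  have hs : IsOpen {x : E | x ≠ 0} := isOpen_ne
  have hvs : v ∈ {x : E | x ≠ 0} := hv
  have hfx : ∀ x ∈ {x : E | x ≠ 0}, ContDiffAt ℝ 3 f x :=
    fun x hx => hf.contDiffAt (hs.mem_nhds hx)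
  have hcd1 : ∀ x ∈ {x : E | x ≠ 0}, ContDiffAt ℝ 2 (fderiv ℝ f) x :=
    fun x hx => (hfx x hx).fderiv_right (by norm_num)
  have hcd2 : ∀ x ∈ {x : E | x ≠ 0}, ContDiffAt ℝ 1 (fderiv ℝ (fderiv ℝ f)) x :=
    fun x hx => (hcd1 x hx).fderiv_right (by norm_num)
  have hd1 : ∀ x ∈ {x : E | x ≠ 0}, DifferentiableAt ℝ f x :=
    fun x hx => (hfx x hx).differentiableAt (by norm_num)
  have hd2 : ∀ x ∈ {x : E | x ≠ 0}, DifferentiableAt ℝ (fderiv ℝ f) x :=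
    fun x hx => (hcd1 x hx).differentiableAt (by norm_num)
  have hd3 : ∀ x ∈ {x : E | x ≠ 0}, DifferentiableAt ℝ (fderiv ℝ (fderiv ℝ f)) x :=
    fun x hx => (hcd2 x hx).differentiableAt (by norm_num)
  have hsmem : ∀ t : ℝ, 0 < t → ∀ x ∈ {x : E | x ≠ 0}, t • x ∈ {x : E | x ≠ 0} :=
    fun t ht x hx => smul_ne_zero (ne_of_gt ht) hx
  -- homogeneity of the first derivative
  have hom1 : ∀ t : ℝ, 0 < t → ∀ x ∈ {x : E | x ≠ 0}, ∀ Y,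
      fderiv ℝ f (t • x) Y = t ^ (k - 1) * fderiv ℝ f x Y := by
    intro t ht x hx Y
    have heq : (fun y => t ^ k * f y) =ᶠ[nhds x] fun y : E => f (t • y) := by
      filter_upwards [hs.mem_nhds hx] with y hy using (hhom t ht y hy).symm
    have hL : HasFDerivAt (fun y : E => f (t • y))
        ((fderiv ℝ f (t • x)).comp (t • ContinuousLinearMap.id ℝ E)) x :=
      (hd1 _ (hsmem t ht x hx)).hasFDerivAt.comp x ((hasFDerivAt_id x).const_smul t)
    have hR : HasFDerivAt (fun y : E => t ^ k * f y) ((t ^ k) • fderiv ℝ f x) x := by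
      exact (hd1 x hx).hasFDerivAt.const_mul (t ^ k)
    have key : (fderiv ℝ f (t • x)).comp (t • ContinuousLinearMap.id ℝ E)
        = (t ^ k) • fderiv ℝ f x := (hL.congr_of_eventuallyEq heq).unique hR
    have h2 := congrFun (congrArg (fun L : E →L[ℝ] ℝ => (L : E → ℝ)) key) Y
    simp only [ContinuousLinearMap.coe_comp', Function.comp_apply,
      ContinuousLinearMap.smul_apply, ContinuousLinearMap.coe_smul',
      Pi.smul_apply, ContinuousLinearMap.coe_id', id_eq, map_smul, smul_eq_mul] at h2
    have htk : t ^ (k - 1) = t ^ k / t := by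
      rw [Real.rpow_sub ht, Real.rpow_one]
    rw [htk]
    field_simp
    linarith [h2]
  have hom1' : ∀ t : ℝ, 0 < t → ∀ x ∈ {x : E | x ≠ 0},
      fderiv ℝ f (t • x) = t ^ (k - 1) • fderiv ℝ f x := by
    intro t ht x hx
    ext Y
    simp [hom1 t ht x hx Y, smul_eq_mul]
  -- homogeneity of the second derivative (at v)
  have hom2 : ∀ t : ℝ, 0 < t → ∀ Y Z,
      fderiv ℝ (fderiv ℝ f) (t • v) Y Z = t ^ (k - 2) * fderiv ℝ (fderiv ℝ f) v Y Z := by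
    intro t ht Y Z
    have heq : (fun y => t ^ (k - 1) • fderiv ℝ f y) =ᶠ[nhds v] fun y : E => fderiv ℝ f (t • y) := by
      filter_upwards [hs.mem_nhds hvs] with y hy using (hom1' t ht y hy).symm
    have hL : HasFDerivAt (fun y : E => fderiv ℝ f (t • y))
        ((fderiv ℝ (fderiv ℝ f) (t • v)).comp (t • ContinuousLinearMap.id ℝ E)) v :=
      (hd2 _ (hsmem t ht v hvs)).hasFDerivAt.comp v ((hasFDerivAt_id v).const_smul t)
    have hR : HasFDerivAt (fun y : E => t ^ (k - 1) • fderiv ℝ f y)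
        ((t ^ (k - 1)) • fderiv ℝ (fderiv ℝ f) v) v :=
      (hd2 v hvs).hasFDerivAt.const_smul (t ^ (k - 1))
    have key : (fderiv ℝ (fderiv ℝ f) (t • v)).comp (t • ContinuousLinearMap.id ℝ E)
        = (t ^ (k - 1)) • fderiv ℝ (fderiv ℝ f) v := (hL.congr_of_eventuallyEq heq).unique hR
    have h2 := congrFun (congrArg (fun L => ((L Y : E →L[ℝ] ℝ) : E → ℝ)) key) Z
    simp only [ContinuousLinearMap.comp_apply, ContinuousLinearMap.smul_apply,
      ContinuousLinearMap.id_apply, map_smul, smul_eq_mul] at h2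
    have htk : t ^ (k - 2) = t ^ (k - 1) / t := by
      rw [show k - 2 = (k - 1) - 1 by ring, Real.rpow_sub ht, Real.rpow_one]
    rw [htk]
    field_simp
    linarith [h2]
  -- Euler identities
  have eulerf : fderiv ℝ f v v = k * f v :=
    euler_aux (hd1 v hvs) (fun t ht => hhom t ht v hv)
  have euler1 : ∀ Y, fderiv ℝ (fderiv ℝ f) v v Y = (k - 1) * fderiv ℝ f v Y := by
    intro Y
    have hfd : HasFDerivAt (fun x : E => fderiv ℝ f x Y)
        ((ContinuousLinearMap.apply ℝ ℝ Y).comp (fderiv ℝ (fderiv ℝ f) v)) v :=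
      (ContinuousLinearMap.apply ℝ ℝ Y).hasFDerivAt.comp v (hd2 v hvs).hasFDerivAt
    have he := euler_aux (m := k - 1) (h := fun x : E => fderiv ℝ f x Y) hfd.differentiableAt
      (fun t ht => hom1 t ht v hvs Y)
    rw [hfd.fderiv] at he
    simpa using he
  have euler2 : ∀ Y Z, fderiv ℝ (fderiv ℝ (fderiv ℝ f)) v v Y Z =
      (k - 2) * fderiv ℝ (fderiv ℝ f) v Y Z := by
    intro Y Z
    have hfd : HasFDerivAt (fun x : E => fderiv ℝ (fderiv ℝ f) x Y Z)
        (((ContinuousLinearMap.apply ℝ ℝ Z).comp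
          (ContinuousLinearMap.apply ℝ (E →L[ℝ] ℝ) Y)).comp
            (fderiv ℝ (fderiv ℝ (fderiv ℝ f)) v)) v := by
      have h := ((hd3 v hvs).hasFDerivAt.clm_apply (hasFDerivAt_const Y v)).clm_apply
        (hasFDerivAt_const Z v)
      refine h.congr_fderiv ?_
      ext w
      simp
    have he := euler_aux (m := k - 2) (h := fun x : E => fderiv ℝ (fderiv ℝ f) x Y Z)
      hfd.differentiableAt (fun t ht => hom2 t ht Y Z)
    rw [hfd.fderiv] at he
    simpa using he
  -- symmetry
  have sym2 : ∀ a b, fderiv ℝ (fderiv ℝ f) v a b = fderiv ℝ (fderiv ℝ f) v b a :=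
    fun a b => ((hfx v hvs).isSymmSndFDerivAt (by norm_num)).eq a b
  have sym3a : ∀ a b c, fderiv ℝ (fderiv ℝ (fderiv ℝ f)) v a b c =
      fderiv ℝ (fderiv ℝ (fderiv ℝ f)) v b a c := by
    intro a b c
    exact congrFun (congrArg _ (((hcd1 v hvs).isSymmSndFDerivAt (by simp)).eq a b)) c
  have sym3b : ∀ a b c, fderiv ℝ (fderiv ℝ (fderiv ℝ f)) v a b c =
      fderiv ℝ (fderiv ℝ (fderiv ℝ f)) v a c b := by
    intro a b c
    have heq : (fun x : E => fderiv ℝ (fderiv ℝ f) x b c)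
        =ᶠ[nhds v] fun x : E => fderiv ℝ (fderiv ℝ f) x c b := by
      filter_upwards [hs.mem_nhds hvs] with x hx
      exact ((hfx x hx).isSymmSndFDerivAt (by norm_num)).eq b c
    have hfd : ∀ Y Z : E, HasFDerivAt (fun x : E => fderiv ℝ (fderiv ℝ f) x Y Z)
        (((ContinuousLinearMap.apply ℝ ℝ Z).comp
          (ContinuousLinearMap.apply ℝ (E →L[ℝ] ℝ) Y)).comp
            (fderiv ℝ (fderiv ℝ (fderiv ℝ f)) v)) v := by
      intro Y Z
      have h := ((hd3 v hvs).hasFDerivAt.clm_apply (hasFDerivAt_const Y v)).clm_apply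
        (hasFDerivAt_const Z v)
      refine h.congr_fderiv ?_
      ext w
      simp
    have h1 := (hfd b c).fderiv
    have h2 := (hfd c b).fderiv
    rw [Filter.EventuallyEq.fderiv_eq heq] at h1
    have := congrFun (congrArg (fun L : E →L[ℝ] ℝ => (L : E → ℝ)) (h1.symm.trans h2)) a
    simpa using this
  -- the algebra
  set P := k * f v with hP
  set cc := fderiv ℝ f v X / P with hcc
  set X₀ := X - cc • v with hX₀
  have hPne : P ≠ 0 := hkf
  have hX : X = X₀ + cc • v := by rw [hX₀]; abel
  have hDX : fderiv ℝ f v X = cc * P := by rw [hcc]; field_simp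
  have hD0 : fderiv ℝ f v X₀ = 0 := by
    rw [hX₀, map_sub, map_smul, smul_eq_mul, eulerf, hcc]
    field_simp
    ring
  have hB0 : fderiv ℝ (fderiv ℝ f) v v X₀ = 0 := by
    rw [euler1 X₀, hD0, mul_zero]
  have hBvv : fderiv ℝ (fderiv ℝ f) v v v = (k - 1) * P := by
    rw [euler1 v, eulerf, hP]
  have e1 : fderiv ℝ (fderiv ℝ (fderiv ℝ f)) v v X₀ X₀ =
      (k - 2) * fderiv ℝ (fderiv ℝ f) v X₀ X₀ := euler2 X₀ X₀
  have e2 : fderiv ℝ (fderiv ℝ (fderiv ℝ f)) v X₀ v X₀ =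
      (k - 2) * fderiv ℝ (fderiv ℝ f) v X₀ X₀ := by rw [sym3a]; exact euler2 X₀ X₀
  have e3 : fderiv ℝ (fderiv ℝ (fderiv ℝ f)) v X₀ X₀ v =
      (k - 2) * fderiv ℝ (fderiv ℝ f) v X₀ X₀ := by
    rw [sym3b, sym3a]; exact euler2 X₀ X₀
  have e4 : fderiv ℝ (fderiv ℝ (fderiv ℝ f)) v v v X₀ = 0 := by
    rw [euler2 v X₀, hB0, mul_zero]
  have e5 : fderiv ℝ (fderiv ℝ (fderiv ℝ f)) v v X₀ v = 0 := by
    rw [sym3b]; exact e4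
  have e6 : fderiv ℝ (fderiv ℝ (fderiv ℝ f)) v X₀ v v = 0 := by
    rw [sym3a]; exact e5
  have e7 : fderiv ℝ (fderiv ℝ (fderiv ℝ f)) v v v v = (k - 2) * ((k - 1) * P) := by
    rw [euler2 v v, hBvv]
  have expand : fderiv ℝ (fderiv ℝ (fderiv ℝ f)) v X X X =
      fderiv ℝ (fderiv ℝ (fderiv ℝ f)) v X₀ X₀ X₀
      + cc * (fderiv ℝ (fderiv ℝ (fderiv ℝ f)) v v X₀ X₀
            + fderiv ℝ (fderiv ℝ (fderiv ℝ f)) v X₀ v X₀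
            + fderiv ℝ (fderiv ℝ (fderiv ℝ f)) v X₀ X₀ v)
      + cc ^ 2 * (fderiv ℝ (fderiv ℝ (fderiv ℝ f)) v v v X₀
            + fderiv ℝ (fderiv ℝ (fderiv ℝ f)) v v X₀ v
            + fderiv ℝ (fderiv ℝ (fderiv ℝ f)) v X₀ v v)
      + cc ^ 3 * fderiv ℝ (fderiv ℝ (fderiv ℝ f)) v v v v := by
    conv_lhs => rw [hX]
    simp only [map_add, map_smul, ContinuousLinearMap.add_apply,
      ContinuousLinearMap.smul_apply, smul_eq_mul]
    ring
  rw [expand, e1, e2, e3, e4, e5, e6, e7, hDX]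
  field_simp
  ring

end

/-- Splitting of the third differential of a homogeneous function along `ker Θ₁` and the
radial direction: with `X₀ = X − (Df(v)(X)/(k·f(v)))·v`,
`D³f(v)(X,X,X) = D³f(v)(X₀,X₀,X₀) + (3(k−2)/(k·f(v)))·D²f(v)(X₀,X₀)·Df(v)(X)
  + ((k−1)(k−2)/(k·f(v))²)·(Df(v)(X))³`. -/
theorem third_differential_splitting (n : ℕ) (k : ℝ) (f : (Fin n → ℝ) → ℝ)
    (hf : ContDiffOn ℝ 3 f {x | x ≠ 0})
    (hhom : ∀ t : ℝ, 0 < t → ∀ x : Fin n → ℝ, x ≠ 0 → f (t • x) = t ^ k * f x)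
    (v : Fin n → ℝ) (hv : v ≠ 0) (hkf : k * f v ≠ 0) (X : Fin n → ℝ) :
    iteratedFDeriv ℝ 3 f v ![X, X, X] =
      iteratedFDeriv ℝ 3 f v
        ![X - (fderiv ℝ f v X / (k * f v)) • v, X - (fderiv ℝ f v X / (k * f v)) • v,
          X - (fderiv ℝ f v X / (k * f v)) • v] +
      (3 * (k - 2) / (k * f v)) *
        iteratedFDeriv ℝ 2 f v
          ![X - (fderiv ℝ f v X / (k * f v)) • v, X - (fderiv ℝ f v X / (k * f v)) • v] *
        fderiv ℝ f v X +
      ((k - 1) * (k - 2) / (k * f v) ^ 2) * (fderiv ℝ f v X) ^ 3 := by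
  have h3 : ∀ a : Fin n → ℝ, iteratedFDeriv ℝ 3 f v ![a, a, a] =
      fderiv ℝ (fderiv ℝ (fderiv ℝ f)) v a a a := by
    intro a
    rw [iteratedFDeriv_succ_apply_right (n := 2), iteratedFDeriv_two_apply]
    simp [Fin.init, Fin.last]
  have h2 : ∀ a : Fin n → ℝ, iteratedFDeriv ℝ 2 f v ![a, a] =
      fderiv ℝ (fderiv ℝ f) v a a := by
    intro a
    rw [iteratedFDeriv_two_apply]
    simp
  rw [h3, h3, h2]
  exact main_aux k f hf hhom v hv hkf X
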